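/- arXiv:2408.06146 — 2 statements merged into one kernel-verified Lean document; each statement's English description precedes it below -/
import Mathlib

section
/- Let X, Y be symmetric real n×n matrices and η > 0. Let u ∈ ℝ be such that u·I_n − η·X is positive definite and tr((u·I_n − η·X)^{-2}) = 1. Define Φ_η(Z) := sup over density matrices M' of [tr(Z·M') + (2/η)·tr(√M')]. If ‖(u·I_n − η·X)⁻¹ · η·Y‖ < 1 (spectral norm), then u·I_n − η·(X + Y) is positive definite and Φ_η(X + Y) − Φ_η(X) ≤ (1/η)·[tr((u·I_n − η·(X+Y))⁻¹) − tr((u·I_n − η·X)⁻¹)]. -/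
open Matrix
open scoped Matrix.Norms.L2Operator
open scoped RealInnerProductSpace

open Classical in
/-- The positive semidefinite square root of a matrix (zero if the matrix is not
positive semidefinite). -/
noncomputable def psdSqrt {n : ℕ} (M : Matrix (Fin n) (Fin n) ℝ) :
    Matrix (Fin n) (Fin n) ℝ :=
  if h : M.PosSemidef then
    h.1.eigenvectorUnitary.1 * diagonal (Real.sqrt ∘ h.1.eigenvalues) *
      (star h.1.eigenvectorUnitary : Matrix (Fin n) (Fin n) ℝ) else 0

/-- The `ℓ_{1/2}`-regularized maximum-eigenvalue potential
`Φ_η(X) = sup { tr(X M) + (2/η) tr(√M) : M a density matrix }`. -/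
noncomputable def potential {n : ℕ} (η : ℝ) (X : Matrix (Fin n) (Fin n) ℝ) : ℝ :=
  sSup {r : ℝ | ∃ M : Matrix (Fin n) (Fin n) ℝ, M.PosSemidef ∧ M.trace = 1 ∧
    r = (X * M).trace + (2 / η) * (psdSqrt M).trace}


open scoped MatrixOrder in
lemma psdSqrt_eq_cfcSqrt {n : ℕ} {M : Matrix (Fin n) (Fin n) ℝ} (hM : M.PosSemidef) :
    psdSqrt M = CFC.sqrt M := by
  rw [CFC.sqrt_eq_real_sqrt M hM.nonneg, cfcₙ_eq_cfc, hM.1.cfc_eq, IsHermitian.cfc,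
    Unitary.conjStarAlgAut_apply, psdSqrt, dif_pos hM, RCLike.ofReal_real_eq_id]
  rfl

lemma psd_trace_nonneg {n : ℕ} {P : Matrix (Fin n) (Fin n) ℝ} (hP : P.PosSemidef) :
    0 ≤ P.trace := by
  rw [Matrix.trace]
  refine Finset.sum_nonneg fun i _ => ?_
  have := hP.dotProduct_mulVec_nonneg (Pi.single i 1)
  simpa [Matrix.mulVec_single, dotProduct, Pi.single_apply, ite_mul,
    Finset.sum_ite_eq, Matrix.diag] using this

lemma posDef_conj {n : ℕ} {D C : Matrix (Fin n) (Fin n) ℝ} (hD : D.PosDef) (hC : IsUnit C) :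
    (C * D * Cᴴ).PosDef := by
  refine posDef_iff_dotProduct_mulVec.mpr ⟨Matrix.isHermitian_mul_mul_conjTranspose _ hD.1, fun x hx => ?_⟩
  have hCH : IsUnit Cᴴ := by
    rw [← Matrix.star_eq_conjTranspose]; exact hC.star
  have hinj : Function.Injective (Cᴴ.mulVec) := (Matrix.mulVec_injective_iff_isUnit).mpr hCH
  have hx' : Cᴴ *ᵥ x ≠ 0 := fun h0 => hx (hinj (by simpa using h0))
  have key : star x ⬝ᵥ ((C * D * Cᴴ) *ᵥ x) = star (Cᴴ *ᵥ x) ⬝ᵥ (D *ᵥ (Cᴴ *ᵥ x)) := by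
    rw [star_mulVec, conjTranspose_conjTranspose, ← mulVec_mulVec, ← mulVec_mulVec,
      dotProduct_mulVec]
  rw [key]
  exact hD.dotProduct_mulVec_pos hx'

lemma posDef_of_eigenvalues_pos {n : ℕ} {B : Matrix (Fin n) (Fin n) ℝ} (hB : B.IsHermitian)
    (h : ∀ i, 0 < hB.eigenvalues i) : B.PosDef := by
  rw [hB.spectral_theorem]
  refine posDef_conj (Matrix.PosDef.diagonal fun i => by simpa using h i) ?_
  exact (Unitary.toUnits hB.eigenvectorUnitary).isUnit

open scoped MatrixOrder in
lemma two_trace_sqrt_le {n : ℕ} {A M : Matrix (Fin n) (Fin n) ℝ} (hA : A.PosDef)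
    (hM : M.PosSemidef) :
    2 * (psdSqrt M).trace ≤ (A * M).trace + A⁻¹.trace := by
  have hSdef : psdSqrt M = CFC.sqrt M := psdSqrt_eq_cfcSqrt hM
  set S := psdSqrt M with hS
  have hSpsd : S.PosSemidef := hSdef ▸ (open scoped MatrixOrder in (CFC.sqrt_nonneg M).posSemidef)
  have hSS : S * S = M := by rw [hSdef]; exact (open scoped MatrixOrder in CFC.sqrt_mul_sqrt_self M hM.nonneg)
  have hdet : IsUnit A.det := hA.det_pos.ne'.isUnit
  have h1 : A * A⁻¹ = 1 := mul_nonsing_inv _ hdet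
  have h2 : A⁻¹ * A = 1 := nonsing_inv_mul _ hdet
  set C := A * S - 1 with hC
  have hCH : Cᴴ = S * A - 1 := by
    rw [hC, conjTranspose_sub, conjTranspose_mul, conjTranspose_one, hA.1.eq, hSpsd.1.eq]
  have hpsd : (Cᴴ * A⁻¹ * C).PosSemidef := hA.inv.posSemidef.conjTranspose_mul_mul_same C
  have e1 : Cᴴ * A⁻¹ = S - A⁻¹ := by
    rw [hCH, Matrix.sub_mul, Matrix.mul_assoc, h1, Matrix.mul_one, Matrix.one_mul]
  have e2 : Cᴴ * A⁻¹ * C = S * A * S - S - S + A⁻¹ := by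
    rw [e1, hC, Matrix.sub_mul, Matrix.mul_sub, Matrix.mul_sub, Matrix.mul_one, Matrix.mul_one,
      ← Matrix.mul_assoc, ← Matrix.mul_assoc, h2, Matrix.one_mul]
    abel
  have h0 : 0 ≤ (S * A * S).trace - S.trace - S.trace + A⁻¹.trace := by
    have := psd_trace_nonneg hpsd
    rwa [e2, Matrix.trace_add, Matrix.trace_sub, Matrix.trace_sub] at this
  have e3 : (S * A * S).trace = (A * M).trace := by
    rw [Matrix.trace_mul_comm (S * A) S, ← Matrix.mul_assoc, hSS, Matrix.trace_mul_comm]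
  linarith

lemma mem_potential_le {n : ℕ} {Z : Matrix (Fin n) (Fin n) ℝ} {η u : ℝ} (hη : 0 < η)
    (hA : (u • (1 : Matrix (Fin n) (Fin n) ℝ) - η • Z).PosDef) {r : ℝ}
    (hr : ∃ M : Matrix (Fin n) (Fin n) ℝ, M.PosSemidef ∧ M.trace = 1 ∧
      r = (Z * M).trace + (2 / η) * (psdSqrt M).trace) :
    r ≤ (u + ((u • (1 : Matrix (Fin n) (Fin n) ℝ) - η • Z)⁻¹).trace) / η := by
  obtain ⟨M, hM, hMtr, rfl⟩ := hr
  set A := u • (1 : Matrix (Fin n) (Fin n) ℝ) - η • Z with hAdef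
  have h2 := two_trace_sqrt_le hA hM
  have hAM : A * M = u • M - η • (Z * M) := by
    rw [hAdef, Matrix.sub_mul, Matrix.smul_mul, Matrix.smul_mul, Matrix.one_mul]
  have htr : (A * M).trace = u - η * (Z * M).trace := by
    rw [hAM, Matrix.trace_sub, Matrix.trace_smul, Matrix.trace_smul, hMtr]
    simp
  have hmul : (2 / η) * (psdSqrt M).trace * η = 2 * (psdSqrt M).trace := by
    field_simp
  rw [le_div_iff₀ hη, add_mul, hmul]
  nlinarith [h2, htr]


/-- Claim A.1: the potential increase is bounded by the change of the
trace-inverse barrier evaluated at the old shift `u`. -/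
theorem potential_increase_barrier (n : ℕ) (X Y : Matrix (Fin n) (Fin n) ℝ)
    (hX : X.IsSymm) (hY : Y.IsSymm) (η : ℝ) (hη : 0 < η) (u : ℝ)
    (hu : (u • (1 : Matrix (Fin n) (Fin n) ℝ) - η • X).PosDef)
    (htr : ((u • (1 : Matrix (Fin n) (Fin n) ℝ) - η • X)⁻¹ ^ 2).trace = 1)
    (hnorm : ‖(u • (1 : Matrix (Fin n) (Fin n) ℝ) - η • X)⁻¹ * (η • Y)‖ < 1) :
    (u • (1 : Matrix (Fin n) (Fin n) ℝ) - η • (X + Y)).PosDef ∧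
    potential η (X + Y) - potential η X ≤
      (1 / η) *
        (((u • (1 : Matrix (Fin n) (Fin n) ℝ) - η • (X + Y))⁻¹).trace -
          ((u • (1 : Matrix (Fin n) (Fin n) ℝ) - η • X)⁻¹).trace) := by
  set A := u • (1 : Matrix (Fin n) (Fin n) ℝ) - η • X with hAdef
  set B := u • (1 : Matrix (Fin n) (Fin n) ℝ) - η • (X + Y) with hBdef
  have hdet : IsUnit A.det := hu.det_pos.ne'.isUnit
  have hBA : B = A - η • Y := by rw [hAdef, hBdef, smul_add]; abel
  have hYh : (η • Y).IsHermitian := by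
    rw [Matrix.IsHermitian, conjTranspose_eq_transpose_of_trivial, transpose_smul, hY]
  have hBh : B.IsHermitian := by rw [hBA]; exact hu.1.sub hYh
  have hBposdef : B.PosDef := by
    refine posDef_of_eigenvalues_pos hBh fun i => ?_
    by_contra hle
    push_neg at hle
    set μ := hBh.eigenvalues i with hμ
    set v := hBh.eigenvectorBasis i with hv
    have hv1 : ‖v‖ = 1 := hBh.eigenvectorBasis.orthonormal.1 i
    have hBv : B *ᵥ ⇑v = μ • ⇑v := hBh.mulVec_eigenvectorBasis i
    have hYv : (η • Y) *ᵥ ⇑v = A *ᵥ ⇑v - μ • ⇑v := by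
      have hAB : (η • Y) = A - B := by rw [hBA]; abel
      rw [hAB, Matrix.sub_mulVec, hBv]
    have hfun : (A⁻¹ * (η • Y)) *ᵥ ⇑v = ⇑v - μ • (A⁻¹ *ᵥ ⇑v) := by
      rw [← Matrix.mulVec_mulVec, hYv, Matrix.mulVec_sub, Matrix.mulVec_mulVec,
        nonsing_inv_mul _ hdet, Matrix.one_mulVec, Matrix.mulVec_smul]
    set w : EuclideanSpace ℝ (Fin n) := (EuclideanSpace.equiv (Fin n) ℝ).symm (A⁻¹ *ᵥ ⇑v)
      with hw
    have hz : (EuclideanSpace.equiv (Fin n) ℝ).symm ((A⁻¹ * (η • Y)) *ᵥ ⇑v) = v - μ • w := by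
      rw [hfun]; rfl
    have hbound : ‖(EuclideanSpace.equiv (Fin n) ℝ).symm ((A⁻¹ * (η • Y)) *ᵥ ⇑v)‖ ≤
        ‖A⁻¹ * (η • Y)‖ * ‖v‖ := Matrix.l2_opNorm_mulVec (A⁻¹ * (η • Y)) v
    rw [hz, hv1, mul_one] at hbound
    have hinner : 0 ≤ ⟪v, w⟫ := by
      have := (hu.inv.posSemidef).dotProduct_mulVec_nonneg ⇑v
      simpa [PiLp.inner_apply, dotProduct, hw, mul_comm] using this
    have hsq : ‖v - μ • w‖ ^ 2 = 1 - 2 * (μ * ⟪v, w⟫) + μ ^ 2 * ‖w‖ ^ 2 := by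
      rw [norm_sub_sq_real, real_inner_smul_right, norm_smul, hv1]
      simp [mul_pow, sq_abs]
    have h1le : (1 : ℝ) ≤ ‖v - μ • w‖ := by
      nlinarith [norm_nonneg (v - μ • w), sq_nonneg μ, sq_nonneg ‖w‖,
        mul_nonneg (neg_nonneg.mpr hle) hinner]
    have : ‖A⁻¹ * (η • Y)‖ < 1 := hnorm
    linarith
  refine ⟨hBposdef, ?_⟩
  set M₀ := A⁻¹ ^ 2 with hM₀
  have hM₀psd : M₀.PosSemidef := hu.inv.posSemidef.pow 2
  have hM₀tr : M₀.trace = 1 := htr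
  have hsqrt : psdSqrt M₀ = A⁻¹ := by
    rw [psdSqrt_eq_cfcSqrt hM₀psd]
    exact (open scoped MatrixOrder in CFC.sqrt_sq _ hu.inv.posSemidef.nonneg)
  have hAM₀ : A * M₀ = A⁻¹ := by
    rw [hM₀, pow_two, ← Matrix.mul_assoc, mul_nonsing_inv _ hdet, Matrix.one_mul]
  -- lower bound for potential η X
  have hbddX : BddAbove {r : ℝ | ∃ M : Matrix (Fin n) (Fin n) ℝ, M.PosSemidef ∧ M.trace = 1 ∧
      r = (X * M).trace + (2 / η) * (psdSqrt M).trace} :=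
    ⟨(u + (A⁻¹).trace) / η, fun r hr => mem_potential_le hη hu hr⟩
  have hmemX : ((X * M₀).trace + (2 / η) * (psdSqrt M₀).trace) ∈
      {r : ℝ | ∃ M : Matrix (Fin n) (Fin n) ℝ, M.PosSemidef ∧ M.trace = 1 ∧
      r = (X * M).trace + (2 / η) * (psdSqrt M).trace} := ⟨M₀, hM₀psd, hM₀tr, rfl⟩
  have hval : (X * M₀).trace + (2 / η) * (psdSqrt M₀).trace = (u + (A⁻¹).trace) / η := by
    rw [hsqrt]
    have h1 : A * M₀ = u • M₀ - η • (X * M₀) := by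
      rw [hAdef, Matrix.sub_mul, Matrix.smul_mul, Matrix.smul_mul, Matrix.one_mul]
    have h2 : (A⁻¹).trace = u - η * (X * M₀).trace := by
      rw [← hAM₀, h1, Matrix.trace_sub, Matrix.trace_smul, Matrix.trace_smul, hM₀tr]
      simp
    rw [eq_div_iff hη.ne', add_mul]
    have hmul : 2 / η * (A⁻¹).trace * η = 2 * (A⁻¹).trace := by field_simp
    rw [hmul]
    nlinarith [h2]
  have hΦX : (u + (A⁻¹).trace) / η ≤ potential η X := by
    have := le_csSup hbddX hmemX
    rw [hval] at this
    exact this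
  -- upper bound for potential η (X + Y)
  have hΦXY : potential η (X + Y) ≤ (u + (B⁻¹).trace) / η := by
    refine csSup_le ⟨_, ⟨M₀, hM₀psd, hM₀tr, rfl⟩⟩ fun r hr => mem_potential_le hη hBposdef hr
  calc potential η (X + Y) - potential η X
      ≤ (u + (B⁻¹).trace) / η - (u + (A⁻¹).trace) / η := by linarith
    _ = (1 / η) * ((B⁻¹).trace - (A⁻¹).trace) := by ring
end

section
/- Let A₁, …, A_m be symmetric real n×n matrices with Σ_{i=1}^m |A_i| ≼ I_n, and let M be a density matrix. Define the m×m matrix N by N(i,j) := tr(√M · A_i · √M · A_j · √M). Then N is positive semidefinite, and there exists a linear subspace W ⊆ ℝ^m with dim W ≥ m/3 such that every unit vector y ∈ W satisfies yᵀN y ≤ 9√n/m²; equivalently, every unit vector y ∈ W satisfies tr(√M · A(y) · √M · A(y) · √M) ≤ 9√n/m², where A(y) := Σ_{i=1}^m y(i)·A_i. -/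
open Matrix

/-- The matrix absolute value of a symmetric real matrix `C`:
the positive semidefinite square root of `CᴴC = C²`. -/
noncomputable def matAbs {n : ℕ} (C : Matrix (Fin n) (Fin n) ℝ) : Matrix (Fin n) (Fin n) ℝ :=
  (Matrix.posSemidef_conjTranspose_mul_self C).1.eigenvectorUnitary.1 *
    diagonal (Real.sqrt ∘ (Matrix.posSemidef_conjTranspose_mul_self C).1.eigenvalues) *
    (star (Matrix.posSemidef_conjTranspose_mul_self C).1.eigenvectorUnitary : Matrix (Fin n) (Fin n) ℝ)

noncomputable def Matrix.PosSemidef.sqrt {d : ℕ} {Q : Matrix (Fin d) (Fin d) ℝ}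
    (_hQ : Q.PosSemidef) : Matrix (Fin d) (Fin d) ℝ :=
  cfc Real.sqrt Q

theorem Matrix.PosSemidef.expl_eq_sqrt {d : ℕ} {Q : Matrix (Fin d) (Fin d) ℝ}
    (hQ : Q.PosSemidef) :
    hQ.1.eigenvectorUnitary.1 * diagonal (Real.sqrt ∘ hQ.1.eigenvalues) *
      (star hQ.1.eigenvectorUnitary : Matrix (Fin d) (Fin d) ℝ) = hQ.sqrt := by
  rw [Matrix.PosSemidef.sqrt, IsHermitian.cfc_eq hQ.1, IsHermitian.cfc,
    Unitary.conjStarAlgAut_apply]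
  rfl

theorem matAbs_eq_sqrt {d : ℕ} (X : Matrix (Fin d) (Fin d) ℝ) :
    matAbs X = (Matrix.posSemidef_conjTranspose_mul_self X).sqrt :=
  Matrix.PosSemidef.expl_eq_sqrt _

theorem Matrix.PosSemidef.posSemidef_sqrt {d : ℕ} {Q : Matrix (Fin d) (Fin d) ℝ}
    (hQ : Q.PosSemidef) : hQ.sqrt.PosSemidef := by
  rw [← hQ.expl_eq_sqrt, Matrix.star_eq_conjTranspose]
  refine (posSemidef_diagonal_iff.mpr fun i => ?_).mul_mul_conjTranspose_same _
  exact Real.sqrt_nonneg _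

theorem Matrix.PosSemidef.spec_nonneg {d : ℕ} {Q : Matrix (Fin d) (Fin d) ℝ}
    (hQ : Q.PosSemidef) : ∀ x ∈ spectrum ℝ Q, 0 ≤ x := by
  intro x hx
  rw [hQ.1.spectrum_real_eq_range_eigenvalues] at hx
  obtain ⟨i, rfl⟩ := hx
  exact hQ.eigenvalues_nonneg i

theorem Matrix.PosSemidef.sqrt_mul_self {d : ℕ} {Q : Matrix (Fin d) (Fin d) ℝ}
    (hQ : Q.PosSemidef) : hQ.sqrt * hQ.sqrt = Q := by
  have hsa : IsSelfAdjoint Q := hQ.1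
  rw [Matrix.PosSemidef.sqrt, ← cfc_mul Real.sqrt Real.sqrt Q]
  conv_rhs => rw [← cfc_id' ℝ Q hsa]
  exact cfc_congr fun x hx => Real.mul_self_sqrt (hQ.spec_nonneg x hx)

theorem Matrix.PosSemidef.eq_sqrt_of_sq_eq {d : ℕ} {C B : Matrix (Fin d) (Fin d) ℝ}
    (hC : C.PosSemidef) (hB : B.PosSemidef) (h : C ^ 2 = B) : C = hB.sqrt := by
  have hsa : IsSelfAdjoint C := hC.1
  rw [Matrix.PosSemidef.sqrt, ← h, ← cfc_comp_pow Real.sqrt 2 C]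
  conv_lhs => rw [← cfc_id' ℝ C hsa]
  exact (cfc_congr fun x hx => Real.sqrt_sq (hC.spec_nonneg x hx)).symm

namespace LowEigAux

variable {d : ℕ}

lemma mul_vmv (X : Matrix (Fin d) (Fin d) ℝ) (a b : Fin d → ℝ) :
    X * vecMulVec a b = vecMulVec (X *ᵥ a) b := by
  ext i j
  simp only [Matrix.mul_apply, vecMulVec_apply, Matrix.mulVec, dotProduct,
    Finset.sum_mul]
  exact Finset.sum_congr rfl fun k _ => by ring

lemma vmv_mul (X : Matrix (Fin d) (Fin d) ℝ) (a b : Fin d → ℝ) :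
    vecMulVec a b * X = vecMulVec a (b ᵥ* X) := by
  ext i j
  simp only [Matrix.mul_apply, vecMulVec_apply, Matrix.vecMul, dotProduct,
    Finset.mul_sum]
  exact Finset.sum_congr rfl fun k _ => by ring

lemma vmv_mul_vmv (a b c e : Fin d → ℝ) :
    vecMulVec a b * vecMulVec c e = (b ⬝ᵥ c) • vecMulVec a e := by
  ext i j
  simp only [Matrix.mul_apply, vecMulVec_apply, dotProduct, Matrix.smul_apply,
    smul_eq_mul, Finset.sum_mul]
  exact Finset.sum_congr rfl fun k _ => by ring

lemma trace_vmv (a b : Fin d → ℝ) : (vecMulVec a b).trace = a ⬝ᵥ b := by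
  simp [Matrix.trace, Matrix.diag, vecMulVec_apply, dotProduct]

lemma trace5 (S1 S2 S3 : Matrix (Fin d) (Fin d) ℝ) (a b : Fin d → ℝ) :
    (S1 * vecMulVec a a * S2 * vecMulVec b b * S3).trace
      = (a ⬝ᵥ (S2 *ᵥ b)) * (b ⬝ᵥ ((S3 * S1) *ᵥ a)) := by
  rw [mul_vmv S1 a a, vmv_mul, vmv_mul_vmv, smul_mul_assoc, trace_smul, vmv_mul, trace_vmv,
    smul_eq_mul]
  congr 1
  · rw [dotProduct_mulVec]
  · rw [← Matrix.mulVec_mulVec, dotProduct_mulVec, dotProduct_comm]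

lemma trace5_lin {k : ℕ} (S1 S2 S3 : Matrix (Fin d) (Fin d) ℝ) (c e : Fin k → ℝ)
    (P Q : Fin k → Matrix (Fin d) (Fin d) ℝ) :
    (S1 * (∑ t, c t • P t) * S2 * (∑ s, e s • Q s) * S3).trace
      = ∑ t, ∑ s, c t * e s * (S1 * P t * S2 * Q s * S3).trace := by
  simp only [Finset.mul_sum, Finset.sum_mul, mul_smul_comm, smul_mul_assoc, trace_sum,
    trace_smul, smul_eq_mul]
  rw [Finset.sum_comm]
  exact Finset.sum_congr rfl fun t _ => Finset.sum_congr rfl fun s _ => by ring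

lemma dot_sq_le (x y : Fin d → ℝ) : (x ⬝ᵥ y) ^ 2 ≤ (x ⬝ᵥ x) * (y ⬝ᵥ y) := by
  have h := Finset.sum_mul_sq_le_sq_mul_sq Finset.univ x y
  simpa [dotProduct, pow_two] using h

lemma psd_dot {P : Matrix (Fin d) (Fin d) ℝ} (hP : P.PosSemidef) (x : Fin d → ℝ) :
    0 ≤ x ⬝ᵥ (P *ᵥ x) := by
  simpa using hP.dotProduct_mulVec_nonneg x

lemma psd_diag {P : Matrix (Fin d) (Fin d) ℝ} (hP : P.PosSemidef) (i : Fin d) :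
    0 ≤ P i i := by
  have h := psd_dot hP (Pi.single i 1)
  simpa [dotProduct, Matrix.mulVec, Pi.single_apply] using h

lemma psd_trace_nonneg {P : Matrix (Fin d) (Fin d) ℝ} (hP : P.PosSemidef) : 0 ≤ P.trace := by
  rw [Matrix.trace]
  exact Finset.sum_nonneg fun i _ => psd_diag hP i

lemma psd_trace_mul_nonneg {P Q : Matrix (Fin d) (Fin d) ℝ}
    (hP : P.PosSemidef) (hQ : Q.PosSemidef) : 0 ≤ (P * Q).trace := by
  have h1 : P * Q = P * hQ.sqrt * hQ.sqrt := by rw [Matrix.mul_assoc, hQ.sqrt_mul_self]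
  rw [h1, Matrix.trace_mul_cycle]
  have h2 := hP.conjTranspose_mul_mul_same (B := hQ.sqrt)
  rw [hQ.posSemidef_sqrt.isHermitian.eq] at h2
  exact psd_trace_nonneg h2

lemma eig_package (X : Matrix (Fin d) (Fin d) ℝ) (hX : X.IsHermitian) :
    ∃ (lam : Fin d → ℝ) (V : Fin d → Fin d → ℝ),
      (∀ k l, V k ⬝ᵥ V l = if k = l then 1 else 0) ∧
      (∀ p q, (∑ k, V k p * V k q) = if p = q then (1 : ℝ) else 0) ∧
      (∀ p q, X p q = ∑ k, lam k * (V k p * V k q)) ∧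
      (X.PosSemidef → ∀ k, 0 ≤ lam k) := by
  classical
  have hU1 : (hX.eigenvectorUnitary : Matrix (Fin d) (Fin d) ℝ)
      * star (hX.eigenvectorUnitary : Matrix (Fin d) (Fin d) ℝ) = 1 :=
    Matrix.mem_unitaryGroup_iff.mp hX.eigenvectorUnitary.2
  have hU2 : star (hX.eigenvectorUnitary : Matrix (Fin d) (Fin d) ℝ)
      * (hX.eigenvectorUnitary : Matrix (Fin d) (Fin d) ℝ) = 1 :=
    Matrix.mem_unitaryGroup_iff'.mp hX.eigenvectorUnitary.2
  set U : Matrix (Fin d) (Fin d) ℝ := (hX.eigenvectorUnitary : Matrix (Fin d) (Fin d) ℝ)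
    with hU
  refine ⟨hX.eigenvalues, fun k i => U i k, ?_, ?_, ?_, ?_⟩
  · intro k l
    have h := congrFun (congrFun hU2 k) l
    simpa [Matrix.mul_apply, Matrix.star_apply, Matrix.one_apply, dotProduct] using h
  · intro p q
    have h := congrFun (congrFun hU1 p) q
    simpa [Matrix.mul_apply, Matrix.star_apply, Matrix.one_apply] using h
  · intro p q
    have h := congrFun (congrFun hX.spectral_theorem p) q
    rw [h, Unitary.conjStarAlgAut_apply, Matrix.mul_apply]
    simp only [Matrix.mul_diagonal, Matrix.star_apply, star_trivial, Function.comp_apply,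
      RCLike.ofReal_real_eq_id, id_eq]
    exact Finset.sum_congr rfl fun x _ => by ring
  · intro hP k
    exact hP.eigenvalues_nonneg k

lemma sum_rot (F : Fin d → Fin d → Fin d → ℝ) :
    (∑ a, ∑ b, ∑ c, F a b c) = ∑ b, ∑ c, ∑ a, F a b c :=
  calc (∑ a, ∑ b, ∑ c, F a b c) = ∑ b, ∑ a, ∑ c, F a b c := Finset.sum_comm
    _ = ∑ b, ∑ c, ∑ a, F a b c := Finset.sum_congr rfl fun _ _ => Finset.sum_comm

lemma gram_sq (V : Fin d → Fin d → ℝ)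
    (hVV : ∀ k l, V k ⬝ᵥ V l = if k = l then 1 else 0) (f g : Fin d → ℝ) :
    ((Matrix.of fun p q => ∑ k, f k * (V k p * V k q)) *
        (Matrix.of fun p q => ∑ k, g k * (V k p * V k q)))
      = Matrix.of fun p q => ∑ k, (f k * g k) * (V k p * V k q) := by
  ext p q
  simp only [Matrix.mul_apply, Matrix.of_apply]
  calc
    (∑ r, (∑ k, f k * (V k p * V k r)) * ∑ l, g l * (V l r * V l q))
        = ∑ r, ∑ k, ∑ l, (f k * (V k p * V k r)) * (g l * (V l r * V l q)) :=
          Finset.sum_congr rfl fun r _ => Finset.sum_mul_sum _ _ _ _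
    _ = ∑ k, ∑ l, ∑ r, (f k * (V k p * V k r)) * (g l * (V l r * V l q)) :=
          sum_rot _
    _ = ∑ k, ∑ l, (f k * g l * (V k p * V l q)) * (V k ⬝ᵥ V l) := by
          refine Finset.sum_congr rfl fun k _ => Finset.sum_congr rfl fun l _ => ?_
          rw [dotProduct, Finset.mul_sum]
          exact Finset.sum_congr rfl fun r _ => by ring
    _ = ∑ k, (f k * g k) * (V k p * V k q) := by
          simp only [hVV, mul_ite, mul_one, mul_zero, Finset.sum_ite_eq, Finset.mem_univ,
            if_true]

lemma matAbs_eq (X : Matrix (Fin d) (Fin d) ℝ) (hX : X.IsHermitian)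
    (lam : Fin d → ℝ) (V : Fin d → Fin d → ℝ)
    (hVV : ∀ k l, V k ⬝ᵥ V l = if k = l then 1 else 0)
    (hdec : ∀ p q, X p q = ∑ k, lam k * (V k p * V k q)) :
    matAbs X = Matrix.of fun p q => ∑ k, |lam k| * (V k p * V k q) := by
  classical
  set C : Matrix (Fin d) (Fin d) ℝ :=
    Matrix.of fun p q => ∑ k, |lam k| * (V k p * V k q) with hC
  have hXeq : X = Matrix.of fun p q => ∑ k, lam k * (V k p * V k q) := by
    ext p q; exact hdec p q
  have hCpsd : C.PosSemidef := by
    have hD : C = (Matrix.of fun k i => Real.sqrt |lam k| * V k i)ᴴ *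
        (Matrix.of fun k i => Real.sqrt |lam k| * V k i) := by
      ext p q
      simp only [hC, Matrix.mul_apply, Matrix.conjTranspose_apply, Matrix.of_apply,
        star_trivial]
      refine Finset.sum_congr rfl fun k _ => ?_
      have h := Real.mul_self_sqrt (abs_nonneg (lam k))
      calc |lam k| * (V k p * V k q)
          = (Real.sqrt |lam k| * Real.sqrt |lam k|) * (V k p * V k q) := by rw [h]
        _ = Real.sqrt |lam k| * V k p * (Real.sqrt |lam k| * V k q) := by ring
    rw [hD]
    exact Matrix.posSemidef_conjTranspose_mul_self _
  have hsq : C ^ 2 = Xᴴ * X := by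
    rw [pow_two, hX.eq, hXeq, hC, gram_sq V hVV, gram_sq V hVV]
    congr 1
    ext p q
    exact Finset.sum_congr rfl fun k _ => by rw [abs_mul_abs_self]
  exact (matAbs_eq_sqrt X).trans
    (hCpsd.eq_sqrt_of_sq_eq (Matrix.posSemidef_conjTranspose_mul_self X) hsq).symm

lemma trace_gram_mul (c : Fin d → ℝ) (V : Fin d → Fin d → ℝ) (X : Matrix (Fin d) (Fin d) ℝ)
    (hXs : ∀ p q, X p q = X q p) :
    ((Matrix.of fun p q => ∑ k, c k * (V k p * V k q)) * X).trace
      = ∑ k, c k * (V k ⬝ᵥ (X *ᵥ V k)) := by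
  have L : ((Matrix.of fun p q => ∑ k, c k * (V k p * V k q)) * X).trace
      = ∑ p, ∑ q, ∑ k, c k * (V k p * V k q) * X q p := by
    rw [Matrix.trace]
    refine Finset.sum_congr rfl fun p _ => ?_
    simp only [Matrix.diag_apply, Matrix.mul_apply, Matrix.of_apply, Finset.sum_mul]
  rw [L, sum_rot, sum_rot]
  refine Finset.sum_congr rfl fun k _ => ?_
  rw [dotProduct, Finset.mul_sum]
  refine Finset.sum_congr rfl fun p _ => ?_
  simp only [Matrix.mulVec, dotProduct, Finset.mul_sum]
  refine Finset.sum_congr rfl fun q _ => ?_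
  rw [hXs q p]
  ring

lemma quad_decomp {e : ℕ} (N : Matrix (Fin e) (Fin e) ℝ) (lam : Fin e → ℝ)
    (V : Fin e → Fin e → ℝ)
    (hdec : ∀ p q, N p q = ∑ k, lam k * (V k p * V k q)) (y : Fin e → ℝ) :
    y ⬝ᵥ (N *ᵥ y) = ∑ k, lam k * (V k ⬝ᵥ y) ^ 2 := by
  have L : y ⬝ᵥ (N *ᵥ y) = ∑ p, ∑ q, ∑ k, lam k * (V k p * y p * (V k q * y q)) := by
    simp only [dotProduct, Matrix.mulVec, Finset.mul_sum]
    refine Finset.sum_congr rfl fun p _ => Finset.sum_congr rfl fun q _ => ?_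
    rw [hdec p q, Finset.sum_mul, Finset.mul_sum]
    exact Finset.sum_congr rfl fun k _ => by ring
  have sum_rot' : ∀ (F : Fin e → Fin e → Fin e → ℝ),
      (∑ a, ∑ b, ∑ c, F a b c) = ∑ b, ∑ c, ∑ a, F a b c := fun F =>
    calc (∑ a, ∑ b, ∑ c, F a b c) = ∑ b, ∑ a, ∑ c, F a b c := Finset.sum_comm
      _ = ∑ b, ∑ c, ∑ a, F a b c := Finset.sum_congr rfl fun _ _ => Finset.sum_comm
  rw [L, sum_rot', sum_rot']
  refine Finset.sum_congr rfl fun k _ => ?_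
  rw [pow_two, dotProduct, Finset.sum_mul_sum, Finset.mul_sum]
  refine Finset.sum_congr rfl fun p _ => ?_
  rw [Finset.mul_sum]

lemma parseval {e : ℕ} (V : Fin e → Fin e → ℝ)
    (hCol : ∀ p q, (∑ k, V k p * V k q) = if p = q then (1 : ℝ) else 0) (y : Fin e → ℝ) :
    (∑ k, (V k ⬝ᵥ y) ^ 2) = ∑ i, (y i) ^ 2 := by
  have L : (∑ k, (V k ⬝ᵥ y) ^ 2) = ∑ k, ∑ p, ∑ q, y p * y q * (V k p * V k q) := by
    refine Finset.sum_congr rfl fun k _ => ?_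
    rw [pow_two, dotProduct, Finset.sum_mul_sum]
    exact Finset.sum_congr rfl fun p _ => Finset.sum_congr rfl fun q _ => by ring
  have sum_rot' : ∀ (F : Fin e → Fin e → Fin e → ℝ),
      (∑ a, ∑ b, ∑ c, F a b c) = ∑ b, ∑ c, ∑ a, F a b c := fun F =>
    calc (∑ a, ∑ b, ∑ c, F a b c) = ∑ b, ∑ a, ∑ c, F a b c := Finset.sum_comm
      _ = ∑ b, ∑ c, ∑ a, F a b c := Finset.sum_congr rfl fun _ _ => Finset.sum_comm
  rw [L, sum_rot']
  have : ∀ p, (∑ q, ∑ k, y p * y q * (V k p * V k q)) = y p ^ 2 := by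
    intro p
    have h1 : ∀ q, (∑ k, y p * y q * (V k p * V k q)) = y p * y q * ∑ k, V k p * V k q := by
      intro q; rw [Finset.mul_sum]
    rw [Finset.sum_congr rfl fun q _ => h1 q]
    simp only [hCol, mul_ite, mul_one, mul_zero, Finset.sum_ite_eq, Finset.mem_univ, if_true]
    ring
  rw [Finset.sum_congr rfl fun p _ => this p]

lemma herm_sym {P : Matrix (Fin d) (Fin d) ℝ} (hP : P.IsHermitian) (p q : Fin d) :
    P p q = P q p := by
  have h := congrFun (congrFun hP.eq p) q
  simp only [Matrix.conjTranspose_apply, star_trivial] at h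
  exact h.symm

lemma dot_symm (X : Matrix (Fin d) (Fin d) ℝ) (hX : Xᵀ = X) (x y : Fin d → ℝ) :
    x ⬝ᵥ (X *ᵥ y) = y ⬝ᵥ (X *ᵥ x) := by
  rw [dotProduct_mulVec]
  conv_lhs => rw [← hX]
  rw [Matrix.vecMul_transpose, dotProduct_comm]

lemma dot_factor (P R : Matrix (Fin d) (Fin d) ℝ) (hRt : Rᵀ = R) (hPR : R * R = P)
    (x y : Fin d → ℝ) : x ⬝ᵥ (P *ᵥ y) = (R *ᵥ x) ⬝ᵥ (R *ᵥ y) := by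
  rw [← hPR, ← Matrix.mulVec_mulVec, dotProduct_mulVec]
  have h : x ᵥ* R = R *ᵥ x := by
    conv_lhs => rw [← hRt]
    rw [Matrix.vecMul_transpose]
  rw [h]

lemma psd_cs (P R : Matrix (Fin d) (Fin d) ℝ) (hRt : Rᵀ = R) (hPR : R * R = P)
    (x y : Fin d → ℝ) :
    (x ⬝ᵥ (P *ᵥ y)) ^ 2 ≤ (x ⬝ᵥ (P *ᵥ x)) * (y ⬝ᵥ (P *ᵥ y)) := by
  rw [dot_factor P R hRt hPR x y, dot_factor P R hRt hPR x x, dot_factor P R hRt hPR y y]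
  exact dot_sq_le _ _

lemma sum_dot {ι : Type*} [Fintype ι] (f : ι → Fin d → ℝ) (w : Fin d → ℝ) :
    (∑ k, f k) ⬝ᵥ w = ∑ k, f k ⬝ᵥ w :=
  calc (∑ k, f k) ⬝ᵥ w = ∑ i, (∑ k, f k i) * w i := by
        rw [dotProduct]
        exact Finset.sum_congr rfl fun i _ => by rw [Finset.sum_apply]
    _ = ∑ i, ∑ k, f k i * w i := Finset.sum_congr rfl fun i _ => Finset.sum_mul _ _ _
    _ = ∑ k, ∑ i, f k i * w i := Finset.sum_comm
    _ = ∑ k, f k ⬝ᵥ w := rfl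

end LowEigAux

set_option maxHeartbeats 3200000 in
/-- Low eigenspace lemma (Lemma 3.2) together with positive semidefiniteness of
the matrix `N(i,j) = tr(√M Aᵢ √M Aⱼ √M)`, stated in subspace form. -/
theorem low_eigenspace (n m : ℕ) (A : Fin m → Matrix (Fin n) (Fin n) ℝ)
    (hsymm : ∀ i, (A i).IsSymm)
    (hsum : ((1 : Matrix (Fin n) (Fin n) ℝ) - ∑ i, matAbs (A i)).PosSemidef)
    (M : Matrix (Fin n) (Fin n) ℝ) (hM : M.PosSemidef) (htr : M.trace = 1) :
    (Matrix.of fun i j : Fin m =>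
      (psdSqrt M * A i * psdSqrt M * A j * psdSqrt M).trace).PosSemidef ∧
    ∃ W : Submodule ℝ (Fin m → ℝ),
      (m : ℝ) / 3 ≤ (Module.finrank ℝ W : ℝ) ∧
      ∀ y ∈ W, (∑ i, (y i) ^ 2) = 1 →
        y ⬝ᵥ ((Matrix.of fun i j : Fin m =>
            (psdSqrt M * A i * psdSqrt M * A j * psdSqrt M).trace) *ᵥ y) ≤
          9 * Real.sqrt n / m ^ 2 ∧
        (psdSqrt M * (∑ i, y i • A i) * psdSqrt M * (∑ i, y i • A i) * psdSqrt M).trace ≤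
          9 * Real.sqrt n / m ^ 2 := by
  classical
  have hn : 0 < n := by
    rcases Nat.eq_zero_or_pos n with h | h
    · exfalso
      subst h
      have h0 : M.trace = 0 := by simp [Matrix.trace]
      rw [h0] at htr
      norm_num at htr
    · exact h
  set S := psdSqrt M with hSdef
  have hSpsd : S.PosSemidef := by
    rw [hSdef]; unfold psdSqrt; rw [dif_pos hM, hM.expl_eq_sqrt]; exact hM.posSemidef_sqrt
  have hSS : S * S = M := by
    rw [hSdef]; unfold psdSqrt; rw [dif_pos hM, hM.expl_eq_sqrt]; exact hM.sqrt_mul_self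
  have hSh : S.IsHermitian := hSpsd.isHermitian
  have hSt : Sᵀ = S := by
    have h := hSh.eq; rwa [Matrix.conjTranspose_eq_transpose_of_trivial] at h
  have hMt : Mᵀ = M := by
    have h := hM.isHermitian.eq; rwa [Matrix.conjTranspose_eq_transpose_of_trivial] at h
  set R : Matrix (Fin n) (Fin n) ℝ := hSpsd.sqrt with hRdef
  have hRpsd : R.PosSemidef := hSpsd.posSemidef_sqrt
  have hRR : R * R = S := hSpsd.sqrt_mul_self
  have hRt : Rᵀ = R := by
    have h := hRpsd.isHermitian.eq; rwa [Matrix.conjTranspose_eq_transpose_of_trivial] at h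
  have hAh : ∀ i, (A i).IsHermitian := fun i => by
    show (A i)ᴴ = A i
    rw [Matrix.conjTranspose_eq_transpose_of_trivial]
    exact hsymm i
  set N : Matrix (Fin m) (Fin m) ℝ :=
    Matrix.of fun i j : Fin m => (S * A i * S * A j * S).trace with hNdef
  -- Gram representation of N
  have hGram : N = (Matrix.of fun (p : Fin n × Fin n) (i : Fin m) => (R * A i * S) p.1 p.2)ᴴ *
      (Matrix.of fun (p : Fin n × Fin n) (i : Fin m) => (R * A i * S) p.1 p.2) := by
    ext i j
    show (S * A i * S * A j * S).trace = _
    have hfive : S * A i * S * A j * S = (S * A i * R) * (R * A j * S) := by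
      rw [← hRR]; simp only [Matrix.mul_assoc]
    have hT : ∀ (i0 : Fin m) (a b : Fin n), (S * A i0 * R) a b = (R * A i0 * S) b a := by
      intro i0 a b
      have h : (S * A i0 * R)ᵀ = R * A i0 * S := by
        rw [Matrix.transpose_mul, Matrix.transpose_mul, hRt, hSt, hsymm i0, Matrix.mul_assoc]
      calc (S * A i0 * R) a b = (S * A i0 * R)ᵀ b a := rfl
        _ = (R * A i0 * S) b a := by rw [h]
    rw [hfive, Matrix.trace]
    simp only [Matrix.mul_apply, Matrix.conjTranspose_apply, Matrix.of_apply, star_trivial,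
      Matrix.diag_apply]
    calc (∑ a, ∑ b, (S * A i * R) a b * (R * A j * S) b a)
        = ∑ a, ∑ b, (R * A i * S) b a * (R * A j * S) b a :=
          Finset.sum_congr rfl fun a _ => Finset.sum_congr rfl fun b _ => by rw [hT i a b]
      _ = ∑ b, ∑ a, (R * A i * S) b a * (R * A j * S) b a := Finset.sum_comm
      _ = ∑ p : Fin n × Fin n, (R * A i * S) p.1 p.2 * (R * A j * S) p.1 p.2 :=
          (Fintype.sum_prod_type
            (f := fun p : Fin n × Fin n =>
              (R * A i * S) p.1 p.2 * (R * A j * S) p.1 p.2)).symm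
  have hNpsd : N.PosSemidef := by
    rw [hGram]; exact Matrix.posSemidef_conjTranspose_mul_self _
  refine ⟨hNpsd, ?_⟩
  -- spectral data of the A i
  choose lamA VA hVVA hColA hDecA _hPosA using fun i => LowEigAux.eig_package (A i) (hAh i)
  have hABS : ∀ i, matAbs (A i)
      = Matrix.of fun p q => ∑ t, |lamA i t| * (VA i t p * VA i t q) :=
    fun i => LowEigAux.matAbs_eq (A i) (hAh i) (lamA i) (VA i) (hVVA i) (hDecA i)
  set u : Fin m → ℝ := fun i => ∑ t, |lamA i t| * (VA i t ⬝ᵥ (S *ᵥ VA i t)) with hu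
  set v : Fin m → ℝ := fun i => ∑ t, |lamA i t| * (VA i t ⬝ᵥ (M *ᵥ VA i t)) with hv
  have hSsym' : ∀ p q : Fin n, S p q = S q p := fun p q => LowEigAux.herm_sym hSh p q
  have hMsym' : ∀ p q : Fin n, M p q = M q p := fun p q => LowEigAux.herm_sym hM.isHermitian p q
  have hug : ∀ i, (matAbs (A i) * S).trace = u i := fun i => by
    rw [hABS i]; exact LowEigAux.trace_gram_mul _ _ _ hSsym'
  have hvg : ∀ i, (matAbs (A i) * M).trace = v i := fun i => by
    rw [hABS i]; exact LowEigAux.trace_gram_mul _ _ _ hMsym'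
  have hunn : ∀ i, 0 ≤ u i := fun i =>
    Finset.sum_nonneg fun t _ =>
      mul_nonneg (abs_nonneg _) (LowEigAux.psd_dot hSpsd _)
  have hvnn : ∀ i, 0 ≤ v i := fun i =>
    Finset.sum_nonneg fun t _ =>
      mul_nonneg (abs_nonneg _) (LowEigAux.psd_dot hM _)
  have husum : (∑ i, u i) ≤ S.trace := by
    have h1 : (∑ i, u i) = ((∑ i, matAbs (A i)) * S).trace := by
      rw [Finset.sum_mul, Matrix.trace_sum]
      exact Finset.sum_congr rfl fun i _ => (hug i).symm
    have h2 : 0 ≤ ((1 - ∑ i, matAbs (A i)) * S).trace :=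
      LowEigAux.psd_trace_mul_nonneg hsum hSpsd
    rw [Matrix.sub_mul, Matrix.one_mul, Matrix.trace_sub] at h2
    linarith
  have hvsum : (∑ i, v i) ≤ 1 := by
    have h1 : (∑ i, v i) = ((∑ i, matAbs (A i)) * M).trace := by
      rw [Finset.sum_mul, Matrix.trace_sum]
      exact Finset.sum_congr rfl fun i _ => (hvg i).symm
    have h2 : 0 ≤ ((1 - ∑ i, matAbs (A i)) * M).trace :=
      LowEigAux.psd_trace_mul_nonneg hsum hM
    rw [Matrix.sub_mul, Matrix.one_mul, Matrix.trace_sub, htr] at h2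
    linarith
  have htrS_nonneg : 0 ≤ S.trace := LowEigAux.psd_trace_nonneg hSpsd
  have htrS_sq : S.trace ^ 2 ≤ (n : ℝ) := by
    have h1 : S.trace ^ 2 ≤ (n : ℝ) * ∑ j, (S j j) ^ 2 := by
      have h := Finset.sum_mul_sq_le_sq_mul_sq Finset.univ (fun _ : Fin n => (1 : ℝ))
        (fun j => S j j)
      simpa [Matrix.trace, Matrix.diag] using h
    have h2 : (∑ j, (S j j) ^ 2) ≤ M.trace := by
      rw [← hSS, Matrix.trace]
      refine Finset.sum_le_sum fun j _ => ?_
      have hj : (S * S).diag j = ∑ k, S j k * S k j := by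
        simp [Matrix.diag, Matrix.mul_apply]
      rw [hj]
      have : (S j j) ^ 2 = S j j * S j j := by ring
      rw [this]
      exact Finset.single_le_sum (f := fun k => S j k * S k j)
        (fun k _ => by
          show (0 : ℝ) ≤ S j k * S k j
          rw [← hSsym' j k]
          exact mul_self_nonneg _) (Finset.mem_univ j)
    rw [htr] at h2
    nlinarith
  -- spectral data of N
  obtain ⟨lam, V, hVV, hCol, hDec, hPos⟩ := LowEigAux.eig_package N hNpsd.isHermitian
  have hlam : ∀ k, 0 ≤ lam k := hPos hNpsd
  -- diagonal bound N i i ≤ u i * v i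
  have hNdiag : ∀ i, N i i ≤ u i * v i := by
    intro i
    have hAi : A i = ∑ t, lamA i t • vecMulVec (VA i t) (VA i t) := by
      ext p q
      rw [hDecA i p q]
      simp only [Finset.sum_apply, Matrix.sum_apply, Matrix.smul_apply, vecMulVec_apply,
        smul_eq_mul]
    have e1 : N i i = ∑ t, ∑ s, lamA i t * lamA i s *
        ((VA i t ⬝ᵥ (S *ᵥ VA i s)) * (VA i s ⬝ᵥ (M *ᵥ VA i t))) := by
      show (S * A i * S * A i * S).trace = _
      rw [hAi, LowEigAux.trace5_lin]
      refine Finset.sum_congr rfl fun t _ => Finset.sum_congr rfl fun s _ => ?_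
      rw [LowEigAux.trace5, hSS]
    rw [e1]
    set a : Fin n → Fin n → ℝ := fun t s => VA i t ⬝ᵥ (S *ᵥ VA i s) with ha
    set b : Fin n → Fin n → ℝ := fun t s => VA i t ⬝ᵥ (M *ᵥ VA i s) with hb
    set F : Fin n → Fin n → ℝ :=
      fun t s => Real.sqrt (|lamA i t| * |lamA i s|) * |a t s| with hF
    set G : Fin n → Fin n → ℝ :=
      fun t s => Real.sqrt (|lamA i t| * |lamA i s|) * |b t s| with hG
    have hterm : ∀ t s, lamA i t * lamA i s * (a t s * b s t) ≤ F t s * G t s := by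
      intro t s
      have hse : b s t = b t s := LowEigAux.dot_symm M hMt _ _
      have h1 : Real.sqrt (|lamA i t| * |lamA i s|) * Real.sqrt (|lamA i t| * |lamA i s|)
          = |lamA i t| * |lamA i s| := Real.mul_self_sqrt (by positivity)
      rw [hse, hF, hG]
      calc lamA i t * lamA i s * (a t s * b t s)
          ≤ |lamA i t * lamA i s * (a t s * b t s)| := le_abs_self _
        _ = (|lamA i t| * |lamA i s|) * (|a t s| * |b t s|) := by
            rw [abs_mul, abs_mul, abs_mul]
        _ = (Real.sqrt (|lamA i t| * |lamA i s|) * |a t s|)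
            * (Real.sqrt (|lamA i t| * |lamA i s|) * |b t s|) := by
            have h2 : (Real.sqrt (|lamA i t| * |lamA i s|) * |a t s|)
                * (Real.sqrt (|lamA i t| * |lamA i s|) * |b t s|)
                = (Real.sqrt (|lamA i t| * |lamA i s|)
                    * Real.sqrt (|lamA i t| * |lamA i s|)) * (|a t s| * |b t s|) := by ring
            rw [h2, h1]
    have hsum1 : (∑ t, ∑ s, lamA i t * lamA i s * (a t s * b s t))
        ≤ ∑ t, ∑ s, F t s * G t s :=
      Finset.sum_le_sum fun t _ => Finset.sum_le_sum fun s _ => hterm t s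
    have hFG : (∑ t, ∑ s, F t s * G t s) ^ 2
        ≤ (∑ t, ∑ s, F t s ^ 2) * (∑ t, ∑ s, G t s ^ 2) := by
      have h := Finset.sum_mul_sq_le_sq_mul_sq (Finset.univ : Finset (Fin n × Fin n))
        (fun p => F p.1 p.2) (fun p => G p.1 p.2)
      simpa [Fintype.sum_prod_type] using h
    have hFsq : (∑ t, ∑ s, F t s ^ 2) ≤ u i ^ 2 := by
      have hterm2 : ∀ t s, F t s ^ 2 ≤ (|lamA i t| * a t t) * (|lamA i s| * a s s) := by
        intro t s
        have hcs : a t s ^ 2 ≤ a t t * a s s := LowEigAux.psd_cs S R hRt hRR _ _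
        have e : F t s ^ 2 = (|lamA i t| * |lamA i s|) * a t s ^ 2 := by
          rw [hF, mul_pow, Real.sq_sqrt (by positivity), sq_abs]
        rw [e]
        calc (|lamA i t| * |lamA i s|) * a t s ^ 2
            ≤ (|lamA i t| * |lamA i s|) * (a t t * a s s) :=
              mul_le_mul_of_nonneg_left hcs (by positivity)
          _ = (|lamA i t| * a t t) * (|lamA i s| * a s s) := by ring
      have e4 : u i ^ 2 = ∑ t, ∑ s, (|lamA i t| * a t t) * (|lamA i s| * a s s) := by
        simp only [hu]
        rw [pow_two, Finset.sum_mul_sum]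
      rw [e4]
      exact Finset.sum_le_sum fun t _ => Finset.sum_le_sum fun s _ => hterm2 t s
    have hGsq : (∑ t, ∑ s, G t s ^ 2) ≤ v i ^ 2 := by
      have hterm2 : ∀ t s, G t s ^ 2 ≤ (|lamA i t| * b t t) * (|lamA i s| * b s s) := by
        intro t s
        have hcs : b t s ^ 2 ≤ b t t * b s s := LowEigAux.psd_cs M S hSt hSS _ _
        have e : G t s ^ 2 = (|lamA i t| * |lamA i s|) * b t s ^ 2 := by
          rw [hG, mul_pow, Real.sq_sqrt (by positivity), sq_abs]
        rw [e]
        calc (|lamA i t| * |lamA i s|) * b t s ^ 2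
            ≤ (|lamA i t| * |lamA i s|) * (b t t * b s s) :=
              mul_le_mul_of_nonneg_left hcs (by positivity)
          _ = (|lamA i t| * b t t) * (|lamA i s| * b s s) := by ring
      have e4 : v i ^ 2 = ∑ t, ∑ s, (|lamA i t| * b t t) * (|lamA i s| * b s s) := by
        simp only [hv]
        rw [pow_two, Finset.sum_mul_sum]
      rw [e4]
      exact Finset.sum_le_sum fun t _ => Finset.sum_le_sum fun s _ => hterm2 t s
    have hFGnn : 0 ≤ ∑ t, ∑ s, F t s * G t s :=
      Finset.sum_nonneg fun t _ => Finset.sum_nonneg fun s _ =>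
        mul_nonneg (mul_nonneg (Real.sqrt_nonneg _) (abs_nonneg _))
          (mul_nonneg (Real.sqrt_nonneg _) (abs_nonneg _))
    have hFnn : 0 ≤ ∑ t, ∑ s, F t s ^ 2 :=
      Finset.sum_nonneg fun t _ => Finset.sum_nonneg fun s _ => sq_nonneg _
    have hGnn : 0 ≤ ∑ t, ∑ s, G t s ^ 2 :=
      Finset.sum_nonneg fun t _ => Finset.sum_nonneg fun s _ => sq_nonneg _
    have hc0 : (∑ t, ∑ s, F t s * G t s) ^ 2 ≤ (u i * v i) ^ 2 := by
      refine le_trans hFG ?_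
      rw [mul_pow]
      exact mul_le_mul hFsq hGsq hGnn (sq_nonneg (u i))
    have hle : (∑ t, ∑ s, F t s * G t s) ≤ u i * v i :=
      le_of_pow_le_pow_left₀ two_ne_zero (mul_nonneg (hunn i) (hvnn i)) hc0
    exact le_trans hsum1 hle
  -- key counting quantities
  set tval : ℝ := 9 * Real.sqrt n / m ^ 2 with htval
  have htnn : 0 ≤ tval := by positivity
  set cval : ℝ := ∑ i, Real.sqrt (N i i) with hcval
  have hKey1 : (∑ k, Real.sqrt (lam k)) ≤ cval := by
    have hrow : ∀ k, (∑ i0, V k i0 * V k i0) = (1 : ℝ) := fun k => by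
      have h := hVV k k
      rw [if_pos rfl] at h
      exact h
    calc (∑ k, Real.sqrt (lam k)) = ∑ k, ∑ i0, Real.sqrt (lam k) * (V k i0 * V k i0) := by
          refine Finset.sum_congr rfl fun k _ => ?_
          rw [← Finset.mul_sum, hrow k, mul_one]
      _ = ∑ i0, ∑ k, Real.sqrt (lam k) * (V k i0 * V k i0) := Finset.sum_comm
      _ ≤ cval := by
          rw [hcval]
          refine Finset.sum_le_sum fun i0 _ => ?_
          have hann : 0 ≤ ∑ k, Real.sqrt (lam k) * (V k i0 * V k i0) :=
            Finset.sum_nonneg fun k _ => mul_nonneg (Real.sqrt_nonneg _) (mul_self_nonneg _)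
          have hsq : (∑ k, Real.sqrt (lam k) * (V k i0 * V k i0)) ^ 2 ≤ N i0 i0 := by
            have hcs := Finset.sum_mul_sq_le_sq_mul_sq Finset.univ
              (fun k => Real.sqrt (lam k) * V k i0) (fun k => V k i0)
            have e1 : (∑ k, (Real.sqrt (lam k) * V k i0) * V k i0)
                = ∑ k, Real.sqrt (lam k) * (V k i0 * V k i0) :=
              Finset.sum_congr rfl fun k _ => by ring
            have e2 : (∑ k, (Real.sqrt (lam k) * V k i0) ^ 2)
                = ∑ k, lam k * (V k i0 * V k i0) :=
              Finset.sum_congr rfl fun k _ => by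
                rw [mul_pow, Real.sq_sqrt (hlam k)]
                ring
            have e3 : (∑ k, (V k i0) ^ 2) = 1 := by
              have h := hCol i0 i0
              rw [if_pos rfl] at h
              rw [← h]
              exact Finset.sum_congr rfl fun k _ => by ring
            rw [e1, e2, e3, mul_one, ← hDec i0 i0] at hcs
            exact hcs
          calc (∑ k, Real.sqrt (lam k) * (V k i0 * V k i0))
              = Real.sqrt ((∑ k, Real.sqrt (lam k) * (V k i0 * V k i0)) ^ 2) :=
                (Real.sqrt_sq hann).symm
            _ ≤ Real.sqrt (N i0 i0) := Real.sqrt_le_sqrt hsq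
  have hKey3 : cval ^ 2 ≤ (∑ i, u i) * (∑ i, v i) := by
    have h1 : cval ≤ ∑ i, Real.sqrt (u i) * Real.sqrt (v i) := by
      rw [hcval]
      refine Finset.sum_le_sum fun i _ => ?_
      rw [← Real.sqrt_mul (hunn i)]
      exact Real.sqrt_le_sqrt (hNdiag i)
    have h2 : (∑ i, Real.sqrt (u i) * Real.sqrt (v i)) ^ 2 ≤ (∑ i, u i) * (∑ i, v i) := by
      have hcs := Finset.sum_mul_sq_le_sq_mul_sq Finset.univ
        (fun i => Real.sqrt (u i)) (fun i => Real.sqrt (v i))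
      have e1 : (∑ i, Real.sqrt (u i) ^ 2) = ∑ i, u i :=
        Finset.sum_congr rfl fun i _ => Real.sq_sqrt (hunn i)
      have e2 : (∑ i, Real.sqrt (v i) ^ 2) = ∑ i, v i :=
        Finset.sum_congr rfl fun i _ => Real.sq_sqrt (hvnn i)
      rwa [e1, e2] at hcs
    have hcnn : 0 ≤ cval := Finset.sum_nonneg fun i _ => Real.sqrt_nonneg _
    calc cval ^ 2 ≤ (∑ i, Real.sqrt (u i) * Real.sqrt (v i)) ^ 2 :=
          pow_le_pow_left₀ hcnn h1 2
      _ ≤ (∑ i, u i) * (∑ i, v i) := h2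
  have hcnn : 0 ≤ cval := Finset.sum_nonneg fun i _ => Real.sqrt_nonneg _
  have hfinal : cval ^ 4 ≤ (n : ℝ) := by
    have hSu : 0 ≤ ∑ i, u i := Finset.sum_nonneg fun i _ => hunn i
    have h1 : cval ^ 2 ≤ ∑ i, u i := by nlinarith
    nlinarith
  set T : Finset (Fin m) := Finset.univ.filter (fun k => tval < lam k) with hT
  have hTcard : 3 * (T.card : ℝ) ≤ (m : ℝ) := by
    rcases Nat.eq_zero_or_pos m with hm | hm
    · have : T = ∅ := by
        subst hm
        exact Finset.eq_empty_of_isEmpty T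
      rw [this]
      simp
    · have hm' : (0 : ℝ) < (m : ℝ) := by exact_mod_cast hm
      have hn' : (0 : ℝ) < (n : ℝ) := by exact_mod_cast hn
      have hcs : (T.card : ℝ) * Real.sqrt tval ≤ cval := by
        calc (T.card : ℝ) * Real.sqrt tval = ∑ _k ∈ T, Real.sqrt tval := by
              rw [Finset.sum_const, nsmul_eq_mul]
          _ ≤ ∑ k ∈ T, Real.sqrt (lam k) := by
              refine Finset.sum_le_sum fun k hk => Real.sqrt_le_sqrt ?_
              have := (Finset.mem_filter.mp hk).2
              linarith
          _ ≤ ∑ k, Real.sqrt (lam k) :=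
              Finset.sum_le_sum_of_subset_of_nonneg (Finset.filter_subset _ _)
                (fun k _ _ => Real.sqrt_nonneg _)
          _ ≤ cval := hKey1
      have hsqt := Real.sq_sqrt htnn
      have h2 : ((T.card : ℝ)) ^ 2 * tval ≤ cval ^ 2 := by
        have hnn0 : 0 ≤ (T.card : ℝ) * Real.sqrt tval := by positivity
        have h := pow_le_pow_left₀ hnn0 hcs 2
        rw [mul_pow, hsqt] at h
        exact h
      have hm2 : (0 : ℝ) < (m : ℝ) ^ 2 := by positivity
      have e7 : tval * (m : ℝ) ^ 2 = 9 * Real.sqrt n := by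
        rw [htval]; field_simp
      have h8 : (T.card : ℝ) ^ 2 * (9 * Real.sqrt n) ≤ cval ^ 2 * (m : ℝ) ^ 2 := by
        calc (T.card : ℝ) ^ 2 * (9 * Real.sqrt n) = ((T.card : ℝ) ^ 2 * tval) * (m : ℝ) ^ 2 := by
              rw [← e7]; ring
          _ ≤ cval ^ 2 * (m : ℝ) ^ 2 := by
              exact mul_le_mul_of_nonneg_right h2 hm2.le
      have hsqn := Real.sq_sqrt hn'.le
      have h9 : (3 * (T.card : ℝ)) ^ 4 ≤ (m : ℝ) ^ 4 := by
        have hL : 0 ≤ (T.card : ℝ) ^ 2 * (9 * Real.sqrt n) := by positivity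
        have h10 := pow_le_pow_left₀ hL h8 2
        have e11 : ((T.card : ℝ) ^ 2 * (9 * Real.sqrt n)) ^ 2
            = 81 * (T.card : ℝ) ^ 4 * n := by
          rw [mul_pow, mul_pow, hsqn]; ring
        have e12 : (cval ^ 2 * (m : ℝ) ^ 2) ^ 2 = cval ^ 4 * (m : ℝ) ^ 4 := by ring
        rw [e11, e12] at h10
        have h13 : cval ^ 4 * (m : ℝ) ^ 4 ≤ (n : ℝ) * (m : ℝ) ^ 4 :=
          mul_le_mul_of_nonneg_right hfinal (by positivity)
        have h14 : 81 * (T.card : ℝ) ^ 4 * n ≤ (n : ℝ) * (m : ℝ) ^ 4 := le_trans h10 h13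
        have h15 : 81 * (T.card : ℝ) ^ 4 ≤ (m : ℝ) ^ 4 := by
          by_contra hcon
          push_neg at hcon
          nlinarith
        calc (3 * (T.card : ℝ)) ^ 4 = 81 * (T.card : ℝ) ^ 4 := by ring
          _ ≤ (m : ℝ) ^ 4 := h15
      have := le_of_pow_le_pow_left₀ (n := 4) (by norm_num) hm'.le h9
      linarith
  set good : Finset (Fin m) := Finset.univ.filter (fun k => ¬ tval < lam k) with hgood
  have hcardsum : T.card + good.card = m := by
    rw [hT, hgood, Finset.card_filter_add_card_filter_not]
    simp
  have hLI : LinearIndependent ℝ (fun k : {x // x ∈ good} => V (k : Fin m)) := by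
    rw [Fintype.linearIndependent_iff]
    intro gc hg j
    have h0 := congrArg (fun z => z ⬝ᵥ V (j : Fin m)) hg
    simp only [zero_dotProduct] at h0
    rw [LowEigAux.sum_dot] at h0
    have h1 : ∀ k : {x // x ∈ good},
        (gc k • V (k : Fin m)) ⬝ᵥ V (j : Fin m) = if k = j then gc k else 0 := by
      intro k
      rw [smul_dotProduct, hVV, smul_eq_mul]
      by_cases h : k = j
      · simp [h]
      · have h' : (k : Fin m) ≠ (j : Fin m) := fun hc => h (Subtype.ext hc)
        simp [h, h']
    rw [Finset.sum_congr rfl fun k _ => h1 k, Finset.sum_ite_eq' Finset.univ j gc] at h0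
    simpa using h0
  refine ⟨Submodule.span ℝ (Set.range (fun k : {x // x ∈ good} => V (k : Fin m))), ?_, ?_⟩
  · rw [finrank_span_eq_card hLI, Fintype.card_coe]
    have hc : (T.card : ℝ) + (good.card : ℝ) = (m : ℝ) := by exact_mod_cast hcardsum
    linarith
  · intro y hy h1y
    have hzero : ∀ k ∈ T, V k ⬝ᵥ y = 0 := by
      intro k hk
      let f : (Fin m → ℝ) →ₗ[ℝ] ℝ :=
        { toFun := fun z => V k ⬝ᵥ z
          map_add' := fun a b => dotProduct_add _ _ _
          map_smul' := fun c a => by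
            simp [dotProduct_smul, smul_eq_mul] }
      have hsub : Submodule.span ℝ (Set.range (fun k0 : {x // x ∈ good} => V (k0 : Fin m)))
          ≤ LinearMap.ker f := by
        rw [Submodule.span_le]
        rintro z ⟨k0, rfl⟩
        simp only [SetLike.mem_coe, LinearMap.mem_ker]
        show V k ⬝ᵥ V (k0 : Fin m) = 0
        rw [hVV]
        have hne : k ≠ (k0 : Fin m) := by
          intro hkk
          have hg := (Finset.mem_filter.mp k0.2).2
          have hb := (Finset.mem_filter.mp hk).2
          rw [← hkk] at hg
          exact hg hb
        simp [hne]
      have hker := hsub hy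
      exact LinearMap.mem_ker.mp hker
    have hquad : y ⬝ᵥ (N *ᵥ y) = ∑ k, lam k * (V k ⬝ᵥ y) ^ 2 :=
      LowEigAux.quad_decomp N lam V hDec y
    have hpars : (∑ k, (V k ⬝ᵥ y) ^ 2) = 1 := by
      rw [LowEigAux.parseval V hCol y, h1y]
    have hbound : (∑ k, lam k * (V k ⬝ᵥ y) ^ 2) ≤ tval := by
      calc (∑ k, lam k * (V k ⬝ᵥ y) ^ 2) ≤ ∑ k, tval * (V k ⬝ᵥ y) ^ 2 := by
            refine Finset.sum_le_sum fun k _ => ?_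
            by_cases hk : tval < lam k
            · have hz : V k ⬝ᵥ y = 0 := hzero k (Finset.mem_filter.mpr ⟨Finset.mem_univ _, hk⟩)
              rw [hz]
              simp
            · exact mul_le_mul_of_nonneg_right (not_lt.mp hk) (sq_nonneg _)
        _ = tval := by rw [← Finset.mul_sum, hpars, mul_one]
    constructor
    · exact le_trans (le_of_eq hquad) hbound
    · have e : (S * (∑ i, y i • A i) * S * (∑ i, y i • A i) * S).trace = y ⬝ᵥ (N *ᵥ y) := by
        rw [LowEigAux.trace5_lin S S S y y A A]
        have : y ⬝ᵥ (N *ᵥ y) = ∑ i, ∑ j, y i * y j * (S * A i * S * A j * S).trace := by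
          simp only [dotProduct, Matrix.mulVec, hNdef, Matrix.of_apply, Finset.mul_sum]
          exact Finset.sum_congr rfl fun i _ => Finset.sum_congr rfl fun j _ => by ring
        rw [this]
      rw [e]
      exact le_trans (le_of_eq hquad) hbound
end
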